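/- Let H be a finite-dimensional complex Hilbert space and let p and q be orthogonal projections on H. Then there exists a self-adjoint invertible operator z in the center of the unital algebra generated by p and q such that z(pq)^2 = pq and z(qp)^2 = qp. -/

import Mathlib

open Polynomial in
/-- **Halmos' lemma.** Let `E` be a finite-dimensional complex Hilbert space and `p`, `q`
orthogonal projections (self-adjoint idempotents) on `E`.  Then there is a self-adjoint,
invertible element `z` in the centre of the unital algebra `A` generated by `p` and `q`
such that `z (pq)² = pq` and `z (qp)² = qp`. -/
theorem halmos_z {E : Type*} [NormedAddCommGroup E] [InnerProductSpace ℂ E]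
    [FiniteDimensional ℂ E] (p q : E →L[ℂ] E)
    (hp : IsIdempotentElem p) (hq : IsIdempotentElem q)
    (hp' : IsSelfAdjoint p) (hq' : IsSelfAdjoint q) :
    ∃ z ∈ Algebra.adjoin ℂ ({p, q} : Set (E →L[ℂ] E)),
      IsSelfAdjoint z ∧ IsUnit z ∧
      (∀ a ∈ Algebra.adjoin ℂ ({p, q} : Set (E →L[ℂ] E)), a * z = z * a) ∧
      z * (p * q) ^ 2 = p * q ∧ z * (q * p) ^ 2 = q * p := by
  classical
  set c : E →L[ℂ] E := 1 - (p - q)^2 with hc_def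
  -- basic algebra about `c`
  have hswap : (q - p)^2 = (p - q)^2 := by rw [← neg_sub p q, neg_sq]
  have hsq : ∀ s t : E →L[ℂ] E, s * s = s → t * t = t →
      (s - t)^2 = s + t - s * t - t * s := by
    intro s t hs ht
    rw [sq, mul_sub, sub_mul, sub_mul, hs, ht]
    abel
  have hcomm_gen : ∀ s t : E →L[ℂ] E, s * s = s → t * t = t →
      (1 - (s - t)^2) * s = s * (1 - (s - t)^2) := by
    intro s t hs ht
    have hs2 : ∀ x : E →L[ℂ] E, s * (s * x) = s * x := fun x => by
      rw [← mul_assoc, hs]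
    have ht2 : ∀ x : E →L[ℂ] E, t * (t * x) = t * x := fun x => by
      rw [← mul_assoc, ht]
    rw [hsq s t hs ht]
    simp only [sub_mul, mul_sub, add_mul, mul_add, mul_one, one_mul, mul_assoc, hs, ht, hs2, ht2]
    abel
  have hcp : c * p = p * c := by rw [hc_def]; exact hcomm_gen p q hp.eq hq.eq
  have hcq : c * q = q * c := by
    rw [hc_def, ← hswap]; exact hcomm_gen q p hq.eq hp.eq
  have hsqpq : ∀ s t : E →L[ℂ] E, s * s = s → t * t = t →
      (s * t)^2 = s * t * (1 - (s - t)^2) := by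
    intro s t hs ht
    have hs2 : ∀ x : E →L[ℂ] E, s * (s * x) = s * x := fun x => by
      rw [← mul_assoc, hs]
    have ht2 : ∀ x : E →L[ℂ] E, t * (t * x) = t * x := fun x => by
      rw [← mul_assoc, ht]
    rw [hsq s t hs ht, sq]
    simp only [mul_sub, mul_add, mul_one, mul_assoc, hs, ht, hs2, ht2]
    abel
  -- self-adjointness of `c`
  have hc' : IsSelfAdjoint c := by
    rw [hc_def]
    exact (show IsSelfAdjoint (1 : E →L[ℂ] E) from star_one _).sub ((hp'.sub hq').pow 2)
  have hcsym := ContinuousLinearMap.isSelfAdjoint_iff_isSymmetric.mp hc'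
  -- minimal polynomial facts
  have hint : IsIntegral ℂ c := IsIntegral.of_finite ℂ c
  set m := minpoly ℂ c with hm_def
  have hm0 : m ≠ 0 := minpoly.ne_zero hint
  have hker : ∀ x : E, c (c x) = 0 → c x = 0 := by
    intro x hx
    have h2 := hcsym (c x) x
    simp only [ContinuousLinearMap.coe_coe] at h2
    rw [hx] at h2
    simp only [inner_zero_left] at h2
    exact inner_self_eq_zero.mp h2.symm
  have hX2 : ¬ ((X:ℂ[X])^2 ∣ m) := by
    rintro ⟨s, hs⟩
    have hs0 : s ≠ 0 := by
      rintro rfl; rw [mul_zero] at hs; exact hm0 hs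
    have haev : aeval c m = 0 := minpoly.aeval ℂ c
    have h1 : c * (c * aeval c s) = 0 := by
      rw [hs] at haev
      simpa [sq, map_mul, mul_assoc] using haev
    have h2 : c * aeval c s = 0 := by
      ext x
      have h3 := congrArg (fun f : E →L[ℂ] E => f x) h1
      simp only [ContinuousLinearMap.mul_apply, ContinuousLinearMap.zero_apply] at h3 ⊢
      exact hker _ h3
    have h3 : m ∣ X * s := minpoly.dvd ℂ c (by simpa [map_mul] using h2)
    have h4 : (X:ℂ[X])^2 * s ∣ X * s := hs ▸ h3
    have hXs : (X * s : ℂ[X]) ≠ 0 := mul_ne_zero X_ne_zero hs0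
    have h5 := Polynomial.natDegree_le_of_dvd h4 hXs
    rw [natDegree_mul (pow_ne_zero 2 X_ne_zero) hs0, natDegree_mul X_ne_zero hs0,
      natDegree_X_pow, natDegree_X] at h5
    omega
  obtain ⟨r, hr_dvd, hr_ndvd⟩ : ∃ r : ℂ[X], m ∣ X * r ∧ ¬ (X:ℂ[X]) ∣ r := by
    by_cases hXm : (X:ℂ[X]) ∣ m
    · obtain ⟨r, hr⟩ := hXm
      refine ⟨r, by rw [← hr], fun h => hX2 ?_⟩
      obtain ⟨t, ht⟩ := h
      exact ⟨t, by rw [hr, ht]; ring⟩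
    · exact ⟨m, dvd_mul_left m X, hXm⟩
  have hco : IsCoprime (X : ℂ[X]) r :=
    (Polynomial.irreducible_X.coprime_iff_not_dvd).mpr hr_ndvd
  obtain ⟨a, b, hab⟩ := hco
  have hXr : aeval c (X * r) = 0 := by
    obtain ⟨t, ht⟩ := hr_dvd
    rw [ht, map_mul, minpoly.aeval, zero_mul]
  have hkill : ∀ P Q W : ℂ[X], (P - Q = W * (X*r)) → aeval c P = aeval c Q := by
    intro P Q W h
    have h2 := congrArg (aeval c) h
    rw [map_sub, map_mul, hXr, mul_zero] at h2
    exact sub_eq_zero.mp h2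
  set A := aeval c a with hA_def
  set Eop := aeval c (b * r) with hE_def
  set z := aeval c (a + b * r - a * (b * r)) with hz_def0
  have hz_def : z = A + Eop - A * Eop := by
    rw [hz_def0, map_sub, map_add, map_mul (aeval c) a (b*r)]
  have h1 : A * c + Eop = 1 := by
    have h := hkill (a*X + b*r) 1 0 (by linear_combination hab)
    rw [map_one, map_add, map_mul (aeval c) a X, aeval_X] at h
    exact h
  have hce : c * Eop = 0 := by
    have h := hkill (X * (b*r)) 0 b (by ring)
    rw [map_zero, map_mul (aeval c) X (b*r), aeval_X] at h
    exact h
  have hEe : Eop * Eop = Eop := by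
    have h := hkill ((b*r) * (b*r)) (b*r) (-(a*b)) (by linear_combination (b*r) * hab)
    rw [map_mul (aeval c) (b*r) (b*r)] at h
    exact h
  have hzc : z * c = 1 - Eop := by
    have h := hkill ((a + b*r - a*(b*r)) * X) (1 - b*r) ((1-a)*b) (by linear_combination hab)
    rw [map_mul (aeval c) _ X, aeval_X, map_sub (aeval c) 1 (b*r), map_one] at h
    exact h
  have hzE : z * Eop = Eop := by
    have h : z * Eop = A * Eop + Eop * Eop - A * (Eop * Eop) := by
      rw [hz_def]; noncomm_ring
    rw [hEe] at h
    rw [h]; abel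
  have hzu : z * (c + Eop) = 1 := by
    rw [mul_add, hzc, hzE]; abel
  have huz : (c + Eop) * z = 1 := by
    have hcm : (c + Eop) * z = z * (c + Eop) := by
      have h : c + Eop = aeval c (X + b * r) := by rw [map_add, aeval_X]
      rw [h, hz_def0, ← map_mul, ← map_mul, mul_comm]
    rw [hcm, hzu]
  have hzunit : IsUnit z := ⟨⟨z, c + Eop, hzu, huz⟩, rfl⟩
  -- self-adjointness of Eop and z
  have hAc : A * c = c * A := by
    have e1 : A * c = aeval c (a * X) := by rw [map_mul, aeval_X]
    have e2 : c * A = aeval c (X * a) := by rw [map_mul, aeval_X]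
    rw [e1, e2, mul_comm a X]
  have hcA : (1 : E →L[ℂ] E) - Eop = c * A := by rw [← hAc, ← h1]; abel
  have hEc0 : ∀ v, c (Eop v) = 0 := by
    intro v
    have h := congrArg (fun f : E →L[ℂ] E => f v) hce
    simpa [ContinuousLinearMap.mul_apply] using h
  have hsubv : ∀ w : E, w - Eop w = c (A w) := by
    intro w
    have h := congrArg (fun f : E →L[ℂ] E => f w) hcA
    simpa [ContinuousLinearMap.sub_apply, ContinuousLinearMap.one_apply,
      ContinuousLinearMap.mul_apply] using h
  have hEinner : ∀ u w : E, (inner ℂ (Eop u) (w - Eop w) : ℂ) = 0 := by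
    intro u w
    rw [hsubv w]
    have h2 := hcsym (Eop u) (A w)
    simp only [ContinuousLinearMap.coe_coe] at h2
    rw [← h2, hEc0, inner_zero_left]
  have hEinner' : ∀ u w : E, (inner ℂ (u - Eop u) (Eop w) : ℂ) = 0 := by
    intro u w
    rw [hsubv u]
    have h2 := hcsym (A u) (Eop w)
    simp only [ContinuousLinearMap.coe_coe] at h2
    rw [h2, hEc0, inner_zero_right]
  have hEsa : IsSelfAdjoint Eop := by
    rw [ContinuousLinearMap.isSelfAdjoint_iff_isSymmetric]
    intro x y
    simp only [ContinuousLinearMap.coe_coe]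
    have e1 := hEinner x y
    have e2 := hEinner' x y
    rw [inner_sub_right] at e1
    rw [inner_sub_left] at e2
    linear_combination e1 - e2
  have husa : IsSelfAdjoint (c + Eop) := hc'.add hEsa
  have hzsa : IsSelfAdjoint z := by
    have h5 : star z * (c + Eop) = 1 := by
      calc star z * (c + Eop) = star z * star (c + Eop) := by rw [husa.star_eq]
      _ = star ((c + Eop) * z) := (star_mul _ _).symm
      _ = 1 := by rw [huz, star_one]
    show star z = z
    calc star z = star z * ((c + Eop) * z) := by rw [huz, mul_one]
    _ = (star z * (c + Eop)) * z := by rw [mul_assoc]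
    _ = z := by rw [h5, one_mul]
  -- membership and centrality
  have hpmem : p ∈ Algebra.adjoin ℂ ({p, q} : Set (E →L[ℂ] E)) :=
    Algebra.subset_adjoin (Set.mem_insert _ _)
  have hqmem : q ∈ Algebra.adjoin ℂ ({p, q} : Set (E →L[ℂ] E)) :=
    Algebra.subset_adjoin (Set.mem_insert_of_mem _ rfl)
  have hcmem : c ∈ Algebra.adjoin ℂ ({p, q} : Set (E →L[ℂ] E)) := by
    rw [hc_def]
    exact sub_mem (one_mem _) (pow_mem (sub_mem hpmem hqmem) 2)
  have haevmem : ∀ (S : Subalgebra ℂ (E →L[ℂ] E)), c ∈ S → ∀ f : ℂ[X], aeval c f ∈ S := by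
    intro S hS f
    have h := Algebra.adjoin_le (R := ℂ) (Set.singleton_subset_iff.mpr hS)
    apply h
    rw [Algebra.adjoin_singleton_eq_range_aeval]
    exact ⟨f, rfl⟩
  have hzmem : z ∈ Algebra.adjoin ℂ ({p, q} : Set (E →L[ℂ] E)) := by
    rw [hz_def0]; exact haevmem _ hcmem _
  have hcommz : ∀ t : E →L[ℂ] E, c * t = t * c → t * z = z * t := by
    intro t ht
    have hcmemC : c ∈ Subalgebra.centralizer ℂ ({t} : Set (E →L[ℂ] E)) := by
      rw [Subalgebra.mem_centralizer_iff]
      rintro g hg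
      rw [Set.mem_singleton_iff] at hg
      subst hg
      exact ht.symm
    have h := haevmem _ hcmemC (a + b * r - a * (b * r))
    rw [Subalgebra.mem_centralizer_iff] at h
    have := h t (Set.mem_singleton t)
    rw [← hz_def0] at this
    exact this
  have hzp : z * p = p * z := (hcommz p hcp).symm
  have hzq : z * q = q * z := (hcommz q hcq).symm
  have hcentral : ∀ a' ∈ Algebra.adjoin ℂ ({p,q} : Set (E →L[ℂ] E)), a' * z = z * a' := by
    intro a' ha'
    have hsub : Algebra.adjoin ℂ ({p,q} : Set (E →L[ℂ] E)) ≤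
        Subalgebra.centralizer ℂ ({z} : Set (E →L[ℂ] E)) := by
      apply Algebra.adjoin_le
      intro t ht
      simp only [Set.mem_insert_iff, Set.mem_singleton_iff] at ht
      rw [SetLike.mem_coe, Subalgebra.mem_centralizer_iff]
      intro g hg
      rw [Set.mem_singleton_iff] at hg
      subst hg
      rcases ht with rfl | rfl
      · exact hzp
      · exact hzq
    have h := hsub ha'
    rw [Subalgebra.mem_centralizer_iff] at h
    exact (h z (Set.mem_singleton z)).symm
  -- the key annihilation lemma
  have key : ∀ s t : E →L[ℂ] E, IsIdempotentElem s → IsIdempotentElem t →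
      IsSelfAdjoint s → IsSelfAdjoint t → c = 1 - (s - t)^2 → c * t = t * c →
      s * (t * Eop) = 0 := by
    intro s t hs ht hs' ht' hcst hct
    have hssym := ContinuousLinearMap.isSelfAdjoint_iff_isSymmetric.mp hs'
    have htsym := ContinuousLinearMap.isSelfAdjoint_iff_isSymmetric.mp ht'
    have hop : c * (t * Eop) = 0 := by rw [← mul_assoc, hct, mul_assoc, hce, mul_zero]
    ext x
    set w := t (Eop x) with hw
    have hcw : c w = 0 := by
      have h := congrArg (fun f : E →L[ℂ] E => f x) hop
      simpa [ContinuousLinearMap.mul_apply] using h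
    have htw : t w = w := by
      have h := congrArg (fun f : E →L[ℂ] E => f (Eop x)) ht.eq
      simpa [ContinuousLinearMap.mul_apply] using h
    have h2 : (s - t) ((s - t) w) = w := by
      have h3 : c w = w - (s - t) ((s - t) w) := by
        rw [hcst]
        simp [ContinuousLinearMap.sub_apply, ContinuousLinearMap.one_apply, sq,
          ContinuousLinearMap.mul_apply]
      rw [hcw] at h3
      exact (sub_eq_zero.mp h3.symm).symm
    have hpp : ∀ v : E, s (s v) = s v := by
      intro v
      have h := congrArg (fun f : E →L[ℂ] E => f v) hs.eq
      simpa [ContinuousLinearMap.mul_apply] using h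
    have h3 : t (s w) = 0 := by
      have e1 : (s - t) ((s - t) w) = s (s w) - t (s w) - (s (t w) - t (t w)) := by
        simp [ContinuousLinearMap.sub_apply, map_sub]
      have hqq : t (t w) = t w := by
        have h := congrArg (fun f : E →L[ℂ] E => f w) ht.eq
        simpa [ContinuousLinearMap.mul_apply] using h
      rw [e1, hqq, htw, hpp w] at h2
      have h5 := sub_eq_zero_of_eq h2
      calc t (s w) = -(s w - t (s w) - (s w - w) - w) := by abel
      _ = 0 := by rw [h5, neg_zero]
    have hinner : (inner ℂ (s w) (s w) : ℂ) = 0 := by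
      have s1 := hssym w (s w)
      simp only [ContinuousLinearMap.coe_coe] at s1
      rw [hpp w] at s1
      have s2 := htsym w (s w)
      simp only [ContinuousLinearMap.coe_coe] at s2
      rw [h3, inner_zero_right] at s2
      rw [htw] at s2
      rw [s1, s2]
    have hsw : s w = 0 := inner_self_eq_zero.mp hinner
    simpa [ContinuousLinearMap.mul_apply] using hsw
  have hpqe : p * q * Eop = 0 := by
    rw [mul_assoc]
    exact key p q hp hq hp' hq' hc_def hcq
  have hqpe : q * p * Eop = 0 := by
    rw [mul_assoc]
    exact key q p hq hp hq' hp' (by rw [hc_def, ← hswap]) hcp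
  -- final computations
  have hpq2 : (p * q)^2 = p * q * c := by rw [hc_def]; exact hsqpq p q hp.eq hq.eq
  have hqp2 : (q * p)^2 = q * p * c := by
    rw [hc_def, ← hswap]; exact hsqpq q p hq.eq hp.eq
  have goal1 : z * (p * q) ^ 2 = p * q := by
    rw [hpq2, ← mul_assoc z (p*q) c, ← mul_assoc z p q, hzp, mul_assoc p z q, hzq,
      ← mul_assoc p q z, mul_assoc (p*q) z c, hzc, mul_sub, mul_one, hpqe, sub_zero]
  have goal2 : z * (q * p) ^ 2 = q * p := by
    rw [hqp2, ← mul_assoc z (q*p) c, ← mul_assoc z q p, hzq, mul_assoc q z p, hzp,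
      ← mul_assoc q p z, mul_assoc (q*p) z c, hzc, mul_sub, mul_one, hqpe, sub_zero]
  exact ⟨z, hzmem, hzsa, hzunit, hcentral, goal1, goal2⟩
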